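/- If C : ℝ → Matrix n n ℝ solves the damped periodic Lyapunov equation C' = T(Df(γ) C + C Df(γ)ᵀ + Q F(γ) F(γ)ᵀ Qᵀ + a f(γ) f(γ)ᵀ) and λ solves the adjoint equation λ' = -T Df(γ)ᵀ λ with λᵀ f(γ) ≡ 1 and Q = I - f(γ) λᵀ (so λᵀ Q = 0), then d/dt (λ(t)ᵀ C(t) λ(t)) = a T. Consequently, if C is 1-periodic and λ is 1-periodic, then a = 0. -/

import Mathlib

open Matrix

attribute [local instance] Matrix.normedAddCommGroup Matrix.normedSpace

lemma my_vecMulVec_mulVec {n k : ℕ} (w : Fin n → ℝ) (v : Fin k → ℝ) (x : Fin k → ℝ) :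
    vecMulVec w v *ᵥ x = (v ⬝ᵥ x) • w := by
  ext i
  simp only [mulVec, vecMulVec_apply, dotProduct, Pi.smul_apply, smul_eq_mul, Finset.sum_mul]
  exact Finset.sum_congr rfl fun _ _ => by ring

lemma my_vecMul_vecMulVec {n k : ℕ} (x : Fin n → ℝ) (w : Fin n → ℝ) (v : Fin k → ℝ) :
    x ᵥ* vecMulVec w v = (x ⬝ᵥ w) • v := by
  ext j
  simp only [vecMul, vecMulVec_apply, dotProduct, Pi.smul_apply, smul_eq_mul, Finset.sum_mul]
  exact Finset.sum_congr rfl fun _ _ => by ring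

lemma key_alg {n m : ℕ} (T a : ℝ) (D : Matrix (Fin n) (Fin n) ℝ)
    (Fm : Matrix (Fin n) (Fin m) ℝ) (fv lam : Fin n → ℝ) (hn : lam ⬝ᵥ fv = 1)
    (C : Matrix (Fin n) (Fin n) ℝ) :
    (-(T • (Dᵀ *ᵥ lam))) ⬝ᵥ (C *ᵥ lam)
      + lam ⬝ᵥ ((T • (D * C + C * Dᵀ +
          (1 - vecMulVec fv lam) * Fm * Fmᵀ * (1 - vecMulVec fv lam)ᵀ
          + a • vecMulVec fv fv)) *ᵥ lam)
      + lam ⬝ᵥ (C *ᵥ (-(T • (Dᵀ *ᵥ lam)))) = a * T := by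
  set Q : Matrix (Fin n) (Fin n) ℝ := 1 - vecMulVec fv lam with hQdef
  have hQ0 : lam ᵥ* Q = 0 := by
    rw [hQdef, Matrix.vecMul_sub, Matrix.vecMul_one, my_vecMul_vecMulVec, hn, one_smul, sub_self]
  have h1 : lam ⬝ᵥ ((Q * Fm * Fmᵀ * Qᵀ) *ᵥ lam) = 0 := by
    rw [dotProduct_mulVec, show Q * Fm * Fmᵀ * Qᵀ = Q * (Fm * Fmᵀ * Qᵀ) by simp only [Matrix.mul_assoc],
      ← Matrix.vecMul_vecMul, hQ0, Matrix.zero_vecMul, zero_dotProduct]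
  have h2 : lam ⬝ᵥ ((vecMulVec fv fv) *ᵥ lam) = 1 := by
    rw [my_vecMulVec_mulVec, dotProduct_smul, hn, dotProduct_comm, hn, smul_eq_mul, one_mul]
  have h3 : lam ⬝ᵥ ((D * C) *ᵥ lam) = (Dᵀ *ᵥ lam) ⬝ᵥ (C *ᵥ lam) := by
    rw [← Matrix.mulVec_mulVec, dotProduct_mulVec, Matrix.mulVec_transpose]
  have h4 : lam ⬝ᵥ ((C * Dᵀ) *ᵥ lam) = lam ⬝ᵥ (C *ᵥ (Dᵀ *ᵥ lam)) := by
    rw [← Matrix.mulVec_mulVec]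
  rw [Matrix.smul_mulVec, Matrix.add_mulVec, Matrix.add_mulVec, Matrix.add_mulVec,
    Matrix.smul_mulVec]
  simp only [dotProduct_smul, dotProduct_add, smul_eq_mul, h1, h2, h3, h4,
    Matrix.mulVec_smul, Matrix.mulVec_neg, dotProduct_neg, neg_dotProduct, smul_dotProduct]
  ring

/-- if `C` solves the damped periodic Lyapunov equation
`C' = T(Df(γ) C + C Df(γ)ᵀ + Q F(γ) F(γ)ᵀ Qᵀ + a f(γ) f(γ)ᵀ)` with
`Q = I - f(γ) λᵀ`, `λᵀ f(γ) ≡ 1`, `λ` solving the adjoint equation, then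
`d/dt (λᵀ C λ) = a T`; consequently if `C` and `λ` are 1-periodic, `a = 0`. -/
theorem damped_lyapunov_conserved_quantity {n m : ℕ} (T : ℝ) (hT : 0 < T) (a : ℝ)
    (f : (Fin n → ℝ) → (Fin n → ℝ)) (Df : (Fin n → ℝ) → Matrix (Fin n) (Fin n) ℝ)
    (hf : ContDiff ℝ 1 f)
    (hDf : ∀ x, HasFDerivAt f ((Df x).mulVecLin.toContinuousLinearMap) x)
    (F : (Fin n → ℝ) → Matrix (Fin n) (Fin m) ℝ)
    (γ : ℝ → Fin n → ℝ) (hγ : ∀ t, HasDerivAt γ (T • f (γ t)) t)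
    (lam : ℝ → Fin n → ℝ)
    (hlam : ∀ t, HasDerivAt lam (-(T • ((Df (γ t))ᵀ *ᵥ lam t))) t)
    (hnorm : ∀ t, lam t ⬝ᵥ f (γ t) = 1)
    (Q : ℝ → Matrix (Fin n) (Fin n) ℝ)
    (hQ : ∀ t, Q t = 1 - vecMulVec (f (γ t)) (lam t))
    (C : ℝ → Matrix (Fin n) (Fin n) ℝ)
    (hC : ∀ t, HasDerivAt C (T • (Df (γ t) * C t + C t * (Df (γ t))ᵀ +
      Q t * F (γ t) * (F (γ t))ᵀ * (Q t)ᵀ + a • vecMulVec (f (γ t)) (f (γ t)))) t) :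
    (∀ t : ℝ, HasDerivAt (fun s => lam s ⬝ᵥ (C s *ᵥ lam s)) (a * T) t) ∧
    (C 1 = C 0 → lam 1 = lam 0 → a = 0) := by
  have hderiv : ∀ t : ℝ, HasDerivAt (fun s => lam s ⬝ᵥ (C s *ᵥ lam s)) (a * T) t := by
    intro t
    set l' : Fin n → ℝ := -(T • ((Df (γ t))ᵀ *ᵥ lam t)) with hl'
    set C' : Matrix (Fin n) (Fin n) ℝ := T • (Df (γ t) * C t + C t * (Df (γ t))ᵀ +
      Q t * F (γ t) * (F (γ t))ᵀ * (Q t)ᵀ + a • vecMulVec (f (γ t)) (f (γ t))) with hC'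
    have hli : ∀ i, HasDerivAt (fun s => lam s i) (l' i) t :=
      fun i => hasDerivAt_pi.1 (hlam t) i
    have hCij : ∀ i j, HasDerivAt (fun s => C s i j) (C' i j) t :=
      fun i j => hasDerivAt_pi.1 (hasDerivAt_pi.1 (hC t) i) j
    have heq : (fun s => lam s ⬝ᵥ (C s *ᵥ lam s)) =
        fun s => ∑ i : Fin n, ∑ j : Fin n, lam s i * (C s i j * lam s j) := by
      funext s
      simp only [dotProduct, mulVec, Finset.mul_sum]
    have hsum : HasDerivAt (fun s => ∑ i : Fin n, ∑ j : Fin n, lam s i * (C s i j * lam s j))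
        (∑ i : Fin n, ∑ j : Fin n, (l' i * (C t i j * lam t j)
          + lam t i * (C' i j * lam t j + C t i j * l' j))) t := by
      apply HasDerivAt.fun_sum
      intro i _
      apply HasDerivAt.fun_sum
      intro j _
      exact (hli i).mul ((hCij i j).mul (hli j))
    have hswap : (∑ i : Fin n, ∑ j : Fin n, (l' i * (C t i j * lam t j)
          + lam t i * (C' i j * lam t j + C t i j * l' j)))
        = l' ⬝ᵥ (C t *ᵥ lam t) + lam t ⬝ᵥ (C' *ᵥ lam t) + lam t ⬝ᵥ (C t *ᵥ l') := by
      simp only [dotProduct, mulVec, Finset.mul_sum, ← Finset.sum_add_distrib]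
      exact Finset.sum_congr rfl fun i _ => Finset.sum_congr rfl fun j _ => by ring
    rw [heq]
    convert hsum using 1
    rw [hswap, hl', hC', hQ t]
    exact (key_alg T a (Df (γ t)) (F (γ t)) (f (γ t)) (lam t) (hnorm t) (C t)).symm
  refine ⟨hderiv, fun hC1 hl1 => ?_⟩
  have hdiff : Differentiable ℝ (fun s => lam s ⬝ᵥ (C s *ᵥ lam s) - a * T * s) := by
    intro x
    exact ((hderiv x).sub ((hasDerivAt_id x).const_mul (a * T))).differentiableAt
  have hconst : ∀ x y : ℝ, (fun s => lam s ⬝ᵥ (C s *ᵥ lam s) - a * T * s) x =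
      (fun s => lam s ⬝ᵥ (C s *ᵥ lam s) - a * T * s) y := by
    apply is_const_of_deriv_eq_zero hdiff
    intro x
    have : HasDerivAt (fun s => lam s ⬝ᵥ (C s *ᵥ lam s) - a * T * s) (a * T - a * T * 1) x :=
      (hderiv x).sub ((hasDerivAt_id x).const_mul (a * T))
    simpa using this.deriv
  have h10 := hconst 1 0
  simp only [hC1, hl1, mul_one, mul_zero, sub_zero] at h10
  have : a * T = 0 := by linarith
  exact (mul_eq_zero.1 this).resolve_right (ne_of_gt hT)
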